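/- The coefficient of x^{-n+3} in the formal Laurent expansion of e^x/(e^x-1)^n equals -(1/48)(n-1)(n-2)(n-4), for every integer n. -/

import Mathlib

/-- `E = e^x` as a formal Laurent series over `ℚ`. -/
noncomputable def E : LaurentSeries ℚ := HahnSeries.ofPowerSeries ℤ ℚ (PowerSeries.exp ℚ)

/-- `q n k` is the coefficient of `x^k` in the Laurent expansion of `e^x/(e^x-1)^n`. -/
noncomputable def q (n k : ℤ) : ℚ := (E * ((E - 1) ^ n)⁻¹).coeff k

noncomputable def uu : PowerSeries ℚ := PowerSeries.mk fun k => 1 / (k+1).factorial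

lemma exp_sub_one : PowerSeries.exp ℚ - 1 = PowerSeries.X * uu := by
  ext n
  cases n with
  | zero => simp [uu, PowerSeries.coeff_exp]
  | succ k => simp [uu, PowerSeries.coeff_exp, PowerSeries.coeff_succ_X_mul, PowerSeries.coeff_one]

lemma isUnit_uu : IsUnit uu := by
  rw [PowerSeries.isUnit_iff_constantCoeff]
  simp [uu, ← PowerSeries.coeff_zero_eq_constantCoeff]

noncomputable def UU : (PowerSeries ℚ)ˣ := isUnit_uu.unit

lemma UU_val : (UU : PowerSeries ℚ) = uu := isUnit_uu.unit_spec

noncomputable def w (m : ℤ) : PowerSeries ℚ := ((UU ^ m : (PowerSeries ℚ)ˣ) : PowerSeries ℚ)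

lemma single_one_mul : (HahnSeries.single (1:ℤ) (1:ℚ)) * HahnSeries.single (-1:ℤ) (1:ℚ) = 1 := by
  rw [HahnSeries.single_mul_single]
  norm_num [HahnSeries.single_zero_one]

noncomputable def sX : (LaurentSeries ℚ)ˣ := Units.mkOfMulEqOne _ _ single_one_mul

lemma sX_val : (sX : LaurentSeries ℚ) = HahnSeries.single 1 1 := rfl

lemma sX_zpow (m : ℤ) :
    ((sX ^ m : (LaurentSeries ℚ)ˣ) : LaurentSeries ℚ) = HahnSeries.single m 1 := by
  cases m with
  | ofNat k =>
      rw [Int.ofNat_eq_coe, zpow_natCast, Units.val_pow_eq_pow_val, sX_val,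
        HahnSeries.single_pow]
      simp
  | negSucc k =>
      rw [zpow_negSucc, ← inv_pow, Units.val_pow_eq_pow_val]
      have h1 : ((sX⁻¹ : (LaurentSeries ℚ)ˣ) : LaurentSeries ℚ)
          = HahnSeries.single (-1 : ℤ) (1:ℚ) := rfl
      rw [h1, HahnSeries.single_pow, one_pow, Int.negSucc_eq]
      congr 1
      simp [nsmul_eq_mul]

noncomputable def VV : (LaurentSeries ℚ)ˣ :=
  Units.map (HahnSeries.ofPowerSeries ℤ ℚ).toMonoidHom UU

lemma VV_zpow (m : ℤ) :
    ((VV ^ m : (LaurentSeries ℚ)ˣ) : LaurentSeries ℚ) = HahnSeries.ofPowerSeries ℤ ℚ (w m) := by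
  have h : VV ^ m = Units.map (HahnSeries.ofPowerSeries ℤ ℚ).toMonoidHom (UU ^ m) :=
    (map_zpow (Units.map (HahnSeries.ofPowerSeries ℤ ℚ).toMonoidHom) UU m).symm
  rw [h]
  rfl

lemma E_sub_one : E - 1 = ((sX * VV : (LaurentSeries ℚ)ˣ) : LaurentSeries ℚ) := by
  rw [Units.val_mul, sX_val]
  have hV : ((VV : (LaurentSeries ℚ)ˣ) : LaurentSeries ℚ)
      = HahnSeries.ofPowerSeries ℤ ℚ uu := by
    show HahnSeries.ofPowerSeries ℤ ℚ (UU : PowerSeries ℚ) = _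
    rw [UU_val]
  rw [hV, E, ← HahnSeries.ofPowerSeries_X, ← map_mul, ← exp_sub_one, map_sub, map_one]

lemma coeff_uu (k : ℕ) : PowerSeries.coeff k uu = 1 / (k+1).factorial := by
  simp [uu]

lemma w_succ (m : ℤ) : w (m + 1) = w m * uu := by
  rw [w, zpow_add_one, Units.val_mul, UU_val]; rfl

lemma coeff_mul3 (f g : PowerSeries ℚ) :
    (PowerSeries.coeff 0 (f*g) = PowerSeries.coeff 0 f * PowerSeries.coeff 0 g) ∧
    (PowerSeries.coeff 1 (f*g) = PowerSeries.coeff 0 f * PowerSeries.coeff 1 g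
      + PowerSeries.coeff 1 f * PowerSeries.coeff 0 g) ∧
    (PowerSeries.coeff 2 (f*g) = PowerSeries.coeff 0 f * PowerSeries.coeff 2 g
      + PowerSeries.coeff 1 f * PowerSeries.coeff 1 g
      + PowerSeries.coeff 2 f * PowerSeries.coeff 0 g) ∧
    (PowerSeries.coeff 3 (f*g) = PowerSeries.coeff 0 f * PowerSeries.coeff 3 g
      + PowerSeries.coeff 1 f * PowerSeries.coeff 2 g
      + PowerSeries.coeff 2 f * PowerSeries.coeff 1 g
      + PowerSeries.coeff 3 f * PowerSeries.coeff 0 g) := by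
  refine ⟨?_, ?_, ?_, ?_⟩ <;>
  · rw [PowerSeries.coeff_mul, Finset.Nat.sum_antidiagonal_eq_sum_range_succ_mk]
    simp [Finset.sum_range_succ]
    try ring

lemma w_coeffs (m : ℤ) :
    PowerSeries.coeff 0 (w m) = 1 ∧
    PowerSeries.coeff 1 (w m) = m/2 ∧
    PowerSeries.coeff 2 (w m) = m/6 + m*(m-1)/8 ∧
    PowerSeries.coeff 3 (w m) = m/24 + m*(m-1)/12 + m*(m-1)*(m-2)/48 := by
  have hu0 : PowerSeries.coeff 0 uu = 1 := by simp [coeff_uu]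
  have hu1 : PowerSeries.coeff 1 uu = 1/2 := by rw [coeff_uu]; norm_num [Nat.factorial]
  have hu2 : PowerSeries.coeff 2 uu = 1/6 := by rw [coeff_uu]; norm_num [Nat.factorial]
  have hu3 : PowerSeries.coeff 3 uu = 1/24 := by rw [coeff_uu]; norm_num [Nat.factorial]
  induction m using Int.induction_on with
  | zero =>
      have h1 : w 0 = 1 := by simp [w]
      rw [h1]; norm_num
  | succ k ih =>
      obtain ⟨i0, i1, i2, i3⟩ := ih
      have h := w_succ (k : ℤ)
      obtain ⟨e0, e1, e2, e3⟩ := coeff_mul3 (w k) uu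
      rw [← h] at e0 e1 e2 e3
      rw [e0, e1, e2, e3, i0, i1, i2, i3, hu0, hu1, hu2, hu3]
      push_cast
      refine ⟨by ring, by ring, by ring, by ring⟩
  | pred k ih =>
      obtain ⟨i0, i1, i2, i3⟩ := ih
      have h : w (-(k:ℤ)) = w (-(k:ℤ)-1) * uu := by
        have h2 := w_succ (-(k:ℤ)-1)
        rwa [show (-(k:ℤ)-1)+1 = -(k:ℤ) by ring] at h2
      obtain ⟨e0, e1, e2, e3⟩ := coeff_mul3 (w (-(k:ℤ)-1)) uu
      rw [← h, i0, hu0] at e0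
      rw [← h, i1, hu0, hu1] at e1
      rw [← h, i2, hu0, hu1, hu2] at e2
      rw [← h, i3, hu0, hu1, hu2, hu3] at e3
      push_cast at e0 e1 e2 e3
      have g0 : PowerSeries.coeff 0 (w (-(k:ℤ)-1)) = 1 := by linear_combination -e0
      have g1 : PowerSeries.coeff 1 (w (-(k:ℤ)-1)) = (-(k:ℚ)-1)/2 := by
        linear_combination -e1 - (1/2) * g0
      have g2 : PowerSeries.coeff 2 (w (-(k:ℤ)-1)) =
          (-(k:ℚ)-1)/6 + (-(k:ℚ)-1)*((-(k:ℚ)-1)-1)/8 := by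
        linear_combination -e2 - (1/6) * g0 - (1/2) * g1
      have g3 : PowerSeries.coeff 3 (w (-(k:ℤ)-1)) =
          (-(k:ℚ)-1)/24 + (-(k:ℚ)-1)*((-(k:ℚ)-1)-1)/12
            + (-(k:ℚ)-1)*((-(k:ℚ)-1)-1)*((-(k:ℚ)-1)-2)/48 := by
        linear_combination -e3 - (1/24) * g0 - (1/6) * g1 - (1/2) * g2
      refine ⟨g0, ?_, ?_, ?_⟩
      · push_cast; linear_combination g1
      · push_cast; linear_combination g2
      · push_cast; linear_combination g3

lemma coeff_exp' (k : ℕ) : PowerSeries.coeff k (PowerSeries.exp ℚ) = 1 / k.factorial := by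
  simp [PowerSeries.coeff_exp]

/-- The coefficient of `x^{-n+3}` in `e^x/(e^x-1)^n` is `-(1/48)(n-1)(n-2)(n-4)`. -/
theorem stmt9 (n : ℤ) :
    q n (-n + 3) = -(1 / 48) * ((n : ℚ) - 1) * ((n : ℚ) - 2) * ((n : ℚ) - 4) := by
  have hkey : E * ((E - 1) ^ n)⁻¹ =
      HahnSeries.single (-n) 1
        * HahnSeries.ofPowerSeries ℤ ℚ (PowerSeries.exp ℚ * w (-n)) := by
    rw [E_sub_one, ← Units.val_zpow_eq_zpow_val, ← Units.val_inv_eq_inv_val, ← zpow_neg,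
      mul_zpow, Units.val_mul, sX_zpow, VV_zpow, map_mul]
    show HahnSeries.ofPowerSeries ℤ ℚ (PowerSeries.exp ℚ) * _ = _
    ring
  rw [q, hkey, show (-n + 3 : ℤ) = (3 : ℤ) + -n by ring, HahnSeries.coeff_single_mul_add,
    one_mul, show (3 : ℤ) = ((3 : ℕ) : ℤ) from rfl, HahnSeries.ofPowerSeries_apply_coeff]
  obtain ⟨c0, c1, c2, c3⟩ := w_coeffs (-n)
  obtain ⟨-, -, -, e3⟩ := coeff_mul3 (PowerSeries.exp ℚ) (w (-n))
  rw [e3, c0, c1, c2, c3, coeff_exp' 0, coeff_exp' 1, coeff_exp' 2, coeff_exp' 3]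
  push_cast
  norm_num [Nat.factorial]
  ring
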